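/- Let s₁ > 0, A₁ > 0, and let ρ be a Borel measure on (0,∞) with ∫ dρ(s)/(1+s) < ∞. Define v(x) = ∫₀^∞ dρ(s)/(x+s) − A₁/(x+s₁) for x > 0. Then either v is identically zero on (0,∞), or the set {x ∈ (0,∞) : v(x) = 0} has at most two elements. -/

import Mathlib

open MeasureTheory

private lemma one_div_bound {x s : ℝ} (hx : 0 < x) (hs : 0 < s) :
    1 / (x + s) ≤ max 1 x⁻¹ * (1 / (1 + s)) := by
  have hxs : 0 < x + s := by linarith
  have h1s : 0 < 1 + s := by linarith
  rw [mul_one_div, div_le_div_iff₀ hxs h1s, one_mul]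
  rcases le_or_gt 1 x with h | h
  · have h1 : (1:ℝ) ≤ max 1 x⁻¹ := le_max_left _ _
    nlinarith
  · have h1 : x⁻¹ ≤ max 1 x⁻¹ := le_max_right _ _
    have h2 : x * x⁻¹ = 1 := mul_inv_cancel₀ hx.ne'
    have h3 : (1:ℝ) ≤ x⁻¹ := by
      rw [le_inv_comm₀ one_pos hx]; simpa using h.le
    nlinarith

private lemma integrable_of_bound (ρ : Measure ℝ)
    (hρint : Integrable (fun s => 1 / (1 + s)) ρ)
    (hae : ∀ᵐ s ∂ρ, 0 < s) {f : ℝ → ℝ} (hf : AEStronglyMeasurable f ρ) {C : ℝ}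
    (hb : ∀ s, 0 < s → |f s| ≤ C * (1 / (1 + s))) : Integrable f ρ := by
  refine (hρint.const_mul C).mono hf ?_
  filter_upwards [hae] with s hs
  calc ‖f s‖ = |f s| := rfl
    _ ≤ C * (1 / (1 + s)) := hb s hs
    _ ≤ ‖C * (1 / (1 + s))‖ := le_abs_self _

private lemma integrable_inv (ρ : Measure ℝ)
    (hρint : Integrable (fun s => 1 / (1 + s)) ρ)
    (hae : ∀ᵐ s ∂ρ, 0 < s) {x : ℝ} (hx : 0 < x) :
    Integrable (fun s => 1 / (x + s)) ρ := by
  have hm : Measurable fun s : ℝ => 1 / (x + s) := by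
    simp only [one_div]
    exact (measurable_id.const_add x).inv
  refine integrable_of_bound ρ hρint hae hm.aestronglyMeasurable
    (C := max 1 x⁻¹) ?_
  intro s hs
  have hxs : 0 < x + s := by linarith
  rw [abs_of_pos (by positivity)]
  exact one_div_bound hx hs

theorem zeros_of_v_at_most_two
    (s₁ A₁ : ℝ) (hs₁ : 0 < s₁) (hA₁ : 0 < A₁)
    (ρ : Measure ℝ) (hρsupp : ρ (Set.Iic 0) = 0)
    (hρint : Integrable (fun s => 1 / (1 + s)) ρ)
    (v : ℝ → ℝ)
    (hv : ∀ x, 0 < x → v x = (∫ s, 1 / (x + s) ∂ρ) - A₁ / (x + s₁)) :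
    (∀ x, 0 < x → v x = 0) ∨
      ∃ a b : ℝ, {x : ℝ | 0 < x ∧ v x = 0} ⊆ {a, b} := by
  by_cases h : ∃ a b : ℝ, {x : ℝ | 0 < x ∧ v x = 0} ⊆ {a, b}
  · exact Or.inr h
  left
  -- a.e. positivity
  have hae : ∀ᵐ s ∂ρ, 0 < s := by
    rw [ae_iff]
    convert hρsupp using 2
    ext s
    simp [not_lt]
  -- extract three distinct zeros
  push_neg at h
  obtain ⟨a, haS, -⟩ := Set.not_subset.mp (h 0 0)
  obtain ⟨b, hbS, hbne⟩ := Set.not_subset.mp (h a a)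
  obtain ⟨c, hcS, hcne⟩ := Set.not_subset.mp (h a b)
  simp only [Set.mem_insert_iff, Set.mem_singleton_iff, not_or] at hbne hcne
  have hba : b ≠ a := by simpa using hbne
  obtain ⟨hca, hcb⟩ := hcne
  obtain ⟨ha, hva⟩ := haS
  obtain ⟨hb, hvb⟩ := hbS
  obtain ⟨hc, hvc⟩ := hcS
  -- integral values at zeros
  have hI : ∀ x : ℝ, 0 < x → v x = 0 → (∫ s, 1 / (x + s) ∂ρ) = A₁ / (x + s₁) := by
    intro x hx hvx
    have := hv x hx
    rw [hvx] at this
    linarith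
  have hIa := hI a ha hva
  have hIb := hI b hb hvb
  have hIc := hI c hc hvc
  -- integrability
  have ia := integrable_inv ρ hρint hae ha
  have ib := integrable_inv ρ hρint hae hb
  have ic := integrable_inv ρ hρint hae hc
  -- partial fraction coefficients
  set α : ℝ := (a + s₁)^2 / ((b - a) * (c - a)) with hα
  set β : ℝ := (b + s₁)^2 / ((a - b) * (c - b)) with hβ
  set γ : ℝ := (c + s₁)^2 / ((a - c) * (b - c)) with hγ
  have hba' : b - a ≠ 0 := sub_ne_zero.mpr hba
  have hca' : c - a ≠ 0 := sub_ne_zero.mpr hca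
  have hcb' : c - b ≠ 0 := sub_ne_zero.mpr hcb
  have hab' : a - b ≠ 0 := sub_ne_zero.mpr (fun h => hba h.symm)
  have hac' : a - c ≠ 0 := sub_ne_zero.mpr (fun h => hca h.symm)
  have hbc' : b - c ≠ 0 := sub_ne_zero.mpr (fun h => hcb h.symm)
  have h_combo : ∀ s : ℝ, 0 < s →
      (s - s₁)^2 / ((a + s) * ((b + s) * (c + s))) =
        α * (1 / (a + s)) + β * (1 / (b + s)) + γ * (1 / (c + s)) := by
    intro s hs
    have h1 : a + s ≠ 0 := by positivity
    have h2 : b + s ≠ 0 := by positivity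
    have h3 : c + s ≠ 0 := by positivity
    rw [hα, hβ, hγ]
    field_simp
    ring
  -- the combination is integrable
  have hint_combo : Integrable (fun s =>
      α * (1 / (a + s)) + β * (1 / (b + s)) + γ * (1 / (c + s))) ρ :=
    ((ia.const_mul α).add (ib.const_mul β)).add (ic.const_mul γ)
  set F : ℝ → ℝ := fun s => (s - s₁)^2 / ((a + s) * ((b + s) * (c + s))) with hF
  have hF_ae : F =ᵐ[ρ] fun s =>
      α * (1 / (a + s)) + β * (1 / (b + s)) + γ * (1 / (c + s)) := by
    filter_upwards [hae] with s hs
    exact h_combo s hs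
  have hFint : Integrable F ρ := hint_combo.congr hF_ae.symm
  have hFval : (∫ s, F s ∂ρ) = 0 := by
    rw [integral_congr_ae hF_ae]
    have i1 : Integrable (fun s => α * (1 / (a + s)) + β * (1 / (b + s))) ρ :=
      (ia.const_mul α).add (ib.const_mul β)
    have i2 : Integrable (fun s => γ * (1 / (c + s))) ρ := ic.const_mul γ
    have i3 : Integrable (fun s => α * (1 / (a + s))) ρ := ia.const_mul α
    have i4 : Integrable (fun s => β * (1 / (b + s))) ρ := ib.const_mul β
    rw [integral_add i1 i2]
    rw [integral_add i3 i4,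
      integral_const_mul, integral_const_mul, integral_const_mul,
      hIa, hIb, hIc]
    have hs₁' := h_combo s₁ hs₁
    have h0 : (s₁ - s₁)^2 / ((a + s₁) * ((b + s₁) * (c + s₁))) = 0 := by
      simp
    rw [h0] at hs₁'
    have : A₁ * (α * (1 / (a + s₁)) + β * (1 / (b + s₁)) + γ * (1 / (c + s₁))) = 0 := by
      rw [← hs₁']; ring
    calc α * (A₁ / (a + s₁)) + β * (A₁ / (b + s₁)) + γ * (A₁ / (c + s₁))
        = A₁ * (α * (1 / (a + s₁)) + β * (1 / (b + s₁)) + γ * (1 / (c + s₁))) := by ring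
      _ = 0 := this
  have hF_nonneg : 0 ≤ᵐ[ρ] F := by
    filter_upwards [hae] with s hs
    have h1 : 0 < a + s := by linarith
    have h2 : 0 < b + s := by linarith
    have h3 : 0 < c + s := by linarith
    positivity
  have hF0 : F =ᵐ[ρ] 0 :=
    (integral_eq_zero_iff_of_nonneg_ae hF_nonneg hFint).mp hFval
  have hae_s₁ : ∀ᵐ s ∂ρ, s = s₁ := by
    filter_upwards [hF0, hae] with s hFs hs
    have h1 : 0 < a + s := by linarith
    have h2 : 0 < b + s := by linarith
    have h3 : 0 < c + s := by linarith
    have hd : (a + s) * ((b + s) * (c + s)) ≠ 0 := by positivity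
    have hFs' : (s - s₁)^2 / ((a + s) * ((b + s) * (c + s))) = 0 := by
      have := hFs
      simpa only [hF, Pi.zero_apply] using this
    rcases div_eq_zero_iff.mp hFs' with h' | h'
    · have := sq_eq_zero_iff.mp h'
      linarith
    · exact absurd h' hd
  -- all integrals are constants
  set m : ℝ := (ρ Set.univ).toReal with hm
  have hint_eq : ∀ x : ℝ, 0 < x → (∫ s, 1 / (x + s) ∂ρ) = m * (1 / (x + s₁)) := by
    intro x hx
    have : (∫ s, 1 / (x + s) ∂ρ) = ∫ _, 1 / (x + s₁) ∂ρ := by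
      refine integral_congr_ae ?_
      filter_upwards [hae_s₁] with s hs
      rw [hs]
    rw [this, integral_const, smul_eq_mul, hm, measureReal_def, mul_one_div]
  -- conclude m = A₁
  have hmA : m = A₁ := by
    have h1 := hint_eq a ha
    rw [hIa] at h1
    have has₁ : a + s₁ ≠ 0 := by positivity
    field_simp at h1
    linarith
  intro x hx
  rw [hv x hx, hint_eq x hx, hmA]
  ring
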